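/- arXiv:2009.01688 — 3 statements merged into one kernel-verified Lean document; each statement's English description precedes it below -/
import Mathlib

section
/- For all real x with 0 < x < π/2, one has Φ₁(x) < Ψ₁(x); equivalently, 2/π + (1 − 2/π)·cos x < (sin x)/x for all x in (0, π/2). -/
open Real

private lemma aux_mono {g g' : ℝ → ℝ} (hd : ∀ y, HasDerivAt g (g' y) y)
    (h0 : g 0 = 0) (hnn : ∀ y, 0 ≤ y → 0 ≤ g' y) {x : ℝ} (hx : 0 ≤ x) : 0 ≤ g x := by
  have hm : MonotoneOn g (Set.Ici 0) := by
    apply monotoneOn_of_deriv_nonneg (convex_Ici 0)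
    · exact fun y _ => (hd y).continuousAt.continuousWithinAt
    · exact fun y _ => (hd y).differentiableAt.differentiableWithinAt
    · intro y hy
      rw [interior_Ici] at hy
      rw [(hd y).deriv]
      exact hnn y (le_of_lt hy)
  have h := hm Set.self_mem_Ici (Set.mem_Ici.2 hx) hx
  rwa [h0] at h

private lemma sin_ge_cubic {x : ℝ} (hx : 0 ≤ x) : x - x ^ 3 / 6 ≤ sin x := by
  have h := aux_mono (g := fun y => sin y - (y - y ^ 3 / 6))
      (g' := fun y => cos y - (1 - y ^ 2 / 2)) ?_ (by norm_num) ?_ hx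
  · linarith
  · intro y
    have h1 := (Real.hasDerivAt_sin y).sub
      ((hasDerivAt_id y).sub ((hasDerivAt_pow 3 y).div_const 6))
    refine h1.congr_deriv ?_
    push_cast; ring
  · intro y _
    have := Real.one_sub_sq_div_two_le_cos (x := y)
    linarith

private lemma cos_le_quartic {x : ℝ} (hx : 0 ≤ x) : cos x ≤ 1 - x ^ 2 / 2 + x ^ 4 / 24 := by
  have h := aux_mono (g := fun y => (1 - y ^ 2 / 2 + y ^ 4 / 24) - cos y)
      (g' := fun y => sin y - (y - y ^ 3 / 6)) ?_ (by norm_num) ?_ hx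
  · linarith
  · intro y
    have h1 := (((hasDerivAt_const y (1:ℝ)).sub ((hasDerivAt_pow 2 y).div_const 2)).add
      ((hasDerivAt_pow 4 y).div_const 24)).sub (Real.hasDerivAt_cos y)
    refine h1.congr_deriv ?_
    push_cast; ring
  · intro y hy
    have := sin_ge_cubic hy
    linarith

private lemma sin_le_quintic {x : ℝ} (hx : 0 ≤ x) : sin x ≤ x - x ^ 3 / 6 + x ^ 5 / 120 := by
  have h := aux_mono (g := fun y => (y - y ^ 3 / 6 + y ^ 5 / 120) - sin y)
      (g' := fun y => (1 - y ^ 2 / 2 + y ^ 4 / 24) - cos y) ?_ (by norm_num) ?_ hx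
  · linarith
  · intro y
    have h1 := (((hasDerivAt_id y).sub ((hasDerivAt_pow 3 y).div_const 6)).add
      ((hasDerivAt_pow 5 y).div_const 120)).sub (Real.hasDerivAt_sin y)
    refine h1.congr_deriv ?_
    push_cast; ring
  · intro y hy
    have := cos_le_quartic hy
    linarith

private lemma cos_ge_sextic {x : ℝ} (hx : 0 ≤ x) :
    1 - x ^ 2 / 2 + x ^ 4 / 24 - x ^ 6 / 720 ≤ cos x := by
  have h := aux_mono (g := fun y => cos y - (1 - y ^ 2 / 2 + y ^ 4 / 24 - y ^ 6 / 720))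
      (g' := fun y => (y - y ^ 3 / 6 + y ^ 5 / 120) - sin y) ?_ (by norm_num) ?_ hx
  · linarith
  · intro y
    have h1 := (Real.hasDerivAt_cos y).sub
      ((((hasDerivAt_const y (1:ℝ)).sub ((hasDerivAt_pow 2 y).div_const 2)).add
        ((hasDerivAt_pow 4 y).div_const 24)).sub ((hasDerivAt_pow 6 y).div_const 720))
    refine h1.congr_deriv ?_
    push_cast; ring
  · intro y hy
    have := sin_le_quintic hy
    linarith

private lemma sin_ge_septic {x : ℝ} (hx : 0 ≤ x) :
    x - x ^ 3 / 6 + x ^ 5 / 120 - x ^ 7 / 5040 ≤ sin x := by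
  have h := aux_mono (g := fun y => sin y - (y - y ^ 3 / 6 + y ^ 5 / 120 - y ^ 7 / 5040))
      (g' := fun y => cos y - (1 - y ^ 2 / 2 + y ^ 4 / 24 - y ^ 6 / 720)) ?_ (by norm_num) ?_ hx
  · linarith
  · intro y
    have h1 := (Real.hasDerivAt_sin y).sub
      ((((hasDerivAt_id y).sub ((hasDerivAt_pow 3 y).div_const 6)).add
        ((hasDerivAt_pow 5 y).div_const 120)).sub ((hasDerivAt_pow 7 y).div_const 5040))
    refine h1.congr_deriv ?_
    push_cast; ring
  · intro y hy
    have := cos_ge_sextic hy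
    linarith

noncomputable def Faux : ℝ → ℝ := fun x => π / 2 * sin x - x - (π / 2 - 1) * (x * cos x)

private lemma Faux_pos_small {x : ℝ} (hx : 0 < x) (hx' : x ≤ 6 / 5) : 0 < Faux x := by
  have hs := sin_ge_septic hx.le
  have hc := cos_le_quartic hx.le
  have hπ1 := Real.pi_gt_d6
  have hπ2 := Real.pi_lt_d2
  have hπ2' : (0:ℝ) < π / 2 - 1 := by nlinarith
  have h1 : π / 2 * (x - x ^ 3 / 6 + x ^ 5 / 120 - x ^ 7 / 5040) ≤ π / 2 * sin x :=
    mul_le_mul_of_nonneg_left hs (by positivity)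
  have h2 : (π / 2 - 1) * (x * cos x) ≤ (π / 2 - 1) * (x * (1 - x ^ 2 / 2 + x ^ 4 / 24)) :=
    mul_le_mul_of_nonneg_left (mul_le_mul_of_nonneg_left hc hx.le) hπ2'.le
  have hx2 : x ^ 2 ≤ 36 / 25 := by nlinarith
  have hinner : 0 < x ^ 3 / 6 - x ^ 5 / 60 - x ^ 7 / 10080 := by
    nlinarith [pow_pos hx 3, sq_nonneg x, pow_pos hx 5]
  have key : 0 < π * (x ^ 3 / 6 - x ^ 5 / 60 - x ^ 7 / 10080) - x ^ 3 / 2 + x ^ 5 / 24 := by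
    nlinarith [pow_pos hx 3, pow_pos hx 5, mul_pos (mul_pos hx hx) hx]
  have heq : π / 2 * (x - x ^ 3 / 6 + x ^ 5 / 120 - x ^ 7 / 5040) - x
      - (π / 2 - 1) * (x * (1 - x ^ 2 / 2 + x ^ 4 / 24))
      = π * (x ^ 3 / 6 - x ^ 5 / 60 - x ^ 7 / 10080) - x ^ 3 / 2 + x ^ 5 / 24 := by ring
  unfold Faux
  linarith

private lemma Faux_hasDeriv (y : ℝ) :
    HasDerivAt Faux (π / 2 * cos y - 1 - (π / 2 - 1) * (cos y - y * sin y)) y := by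
  have h1 := (((Real.hasDerivAt_sin y).const_mul (π / 2)).sub (hasDerivAt_id y)).sub
    (((hasDerivAt_id y).mul (Real.hasDerivAt_cos y)).const_mul (π / 2 - 1))
  have h2 : π / 2 * cos y - 1 - (π / 2 - 1) * (cos y - y * sin y)
      = π / 2 * cos y - 1 - (π / 2 - 1) * (1 * cos y + id y * -sin y) := by
    simp only [id_eq]; ring
  rw [h2]; exact h1

private lemma Faux_deriv : deriv Faux = fun y => π / 2 * cos y - 1 - (π / 2 - 1) * (cos y - y * sin y) := by
  funext y
  exact (Faux_hasDeriv y).deriv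

private lemma Faux_deriv2 (y : ℝ) :
    HasDerivAt (fun y => π / 2 * cos y - 1 - (π / 2 - 1) * (cos y - y * sin y))
      ((π / 2 - 2) * sin y + (π / 2 - 1) * (y * cos y)) y := by
  have h1 := (((Real.hasDerivAt_cos y).const_mul (π / 2)).sub (hasDerivAt_const y (1:ℝ))).sub
    (((Real.hasDerivAt_cos y).sub ((hasDerivAt_id y).mul (Real.hasDerivAt_sin y))).const_mul (π / 2 - 1))
  have h2 : (π / 2 - 2) * sin y + (π / 2 - 1) * (y * cos y)
      = π / 2 * -sin y - 0 - (π / 2 - 1) * (-sin y - (1 * sin y + id y * cos y)) := by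
    simp only [id_eq]; ring
  rw [h2]; exact h1

private lemma Faux_pos {x : ℝ} (hx : 0 < x) (hx' : x < π / 2) : 0 < Faux x := by
  have hπ1 := Real.pi_gt_d6
  have hπ2 := Real.pi_lt_d2
  rcases le_or_gt x (6 / 5) with h | h
  · exact Faux_pos_small hx h
  · -- concavity argument on [6/5, π/2]
    have hd : (6 / 5 : ℝ) < π / 2 := by nlinarith
    have hconc : StrictConcaveOn ℝ (Set.Icc (6 / 5 : ℝ) (π / 2)) Faux := by
      apply strictConcaveOn_of_deriv2_neg (convex_Icc _ _)
      · apply ContinuousOn.sub (ContinuousOn.sub (by fun_prop) (by fun_prop)) (by fun_prop)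
      · intro z hz
        rw [interior_Icc] at hz
        have hz1 : (6 / 5 : ℝ) < z := hz.1
        have hz2 : z < π / 2 := hz.2
        have hiter : deriv^[2] Faux z = deriv (deriv Faux) z := by
          simp [Function.iterate_succ, Function.comp]
        rw [hiter, Faux_deriv, (Faux_deriv2 z).deriv]
        -- show (π/2 - 2) * sin z + ... < 0
        have hsmem : z ∈ Set.Icc (-(π / 2)) (π / 2) := by
          constructor <;> nlinarith
        have hs65 : (6 / 5 : ℝ) ∈ Set.Icc (-(π / 2)) (π / 2) := by
          constructor <;> nlinarith
        have hsin : sin (6 / 5) ≤ sin z :=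
          strictMonoOn_sin.monotoneOn hs65 hsmem hz1.le
        have hsin93 : (93 / 100 : ℝ) ≤ sin (6 / 5) := by
          have := sin_ge_septic (x := 6 / 5) (by norm_num)
          nlinarith
        have hcos : cos z ≤ cos (6 / 5) :=
          Real.cos_le_cos_of_nonneg_of_le_pi (by norm_num) (by nlinarith) hz1.le
        have hcos37 : cos (6 / 5) ≤ 37 / 100 := by
          have := cos_le_quartic (x := 6 / 5) (by norm_num)
          nlinarith
        have hcosnn : 0 ≤ cos z := Real.cos_nonneg_of_mem_Icc hsmem
        have hA : (π / 2 - 2) * sin z ≤ (π / 2 - 2) * (93 / 100) := by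
          apply mul_le_mul_of_nonpos_left (by linarith) (by nlinarith)
        have hB : z * cos z ≤ (π / 2) * (37 / 100) := by
          apply mul_le_mul hz2.le (by linarith) hcosnn (by positivity)
        have hB' : (π / 2 - 1) * (z * cos z) ≤ (π / 2 - 1) * ((π / 2) * (37 / 100)) :=
          mul_le_mul_of_nonneg_left hB (by nlinarith)
        nlinarith
    set a : ℝ := (π / 2 - x) / (π / 2 - 6 / 5) with ha_def
    set b : ℝ := (x - 6 / 5) / (π / 2 - 6 / 5) with hb_def
    have hden : (0:ℝ) < π / 2 - 6 / 5 := by linarith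
    have ha : 0 < a := div_pos (by linarith) hden
    have hb : 0 < b := div_pos (by linarith) hden
    have hab : a + b = 1 := by
      rw [ha_def, hb_def, ← add_div, div_eq_one_iff_eq hden.ne']
      ring
    have hmem1 : (6 / 5 : ℝ) ∈ Set.Icc (6 / 5 : ℝ) (π / 2) := Set.left_mem_Icc.2 hd.le
    have hmem2 : (π / 2 : ℝ) ∈ Set.Icc (6 / 5 : ℝ) (π / 2) := Set.right_mem_Icc.2 hd.le
    have hkey := hconc.2 hmem1 hmem2 (ne_of_lt hd) ha hb hab
    have hxeq : a • (6 / 5 : ℝ) + b • (π / 2 : ℝ) = x := by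
      rw [smul_eq_mul, smul_eq_mul, ha_def, hb_def]
      rw [div_mul_eq_mul_div, div_mul_eq_mul_div, ← add_div, div_eq_iff hden.ne']
      ring
    rw [hxeq] at hkey
    have hF2 : Faux (π / 2) = 0 := by
      unfold Faux
      simp
    have hF1 : 0 < Faux (6 / 5) := Faux_pos_small (by norm_num) le_rfl
    rw [smul_eq_mul, smul_eq_mul, hF2] at hkey
    nlinarith

theorem phi_one_lt_psi_one (x : ℝ) (hx : 0 < x) (hx' : x < π / 2) :
    (π / 2 - 1)⁻¹ * (x - sin x) < sin x - x * cos x ∧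
    2 / π + (1 - 2 / π) * cos x < sin x / x := by
  have hπ1 := Real.pi_gt_d6
  have hπ2 := Real.pi_lt_d2
  have hπ2' : (0:ℝ) < π / 2 - 1 := by nlinarith
  have hF := Faux_pos hx hx'
  unfold Faux at hF
  constructor
  · rw [inv_mul_lt_iff₀ hπ2']
    nlinarith
  · rw [lt_div_iff₀ hx]
    have hπ : (0:ℝ) < π := by linarith
    have hkey : π / 2 * ((2 / π + (1 - 2 / π) * cos x) * x) = x + (π / 2 - 1) * (x * cos x) := by
      field_simp
    have h2 : π / 2 * ((2 / π + (1 - 2 / π) * cos x) * x) < π / 2 * sin x := by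
      rw [hkey]; linarith
    exact lt_of_mul_lt_mul_left h2 (by positivity)
end

section
/- The function F(x) := ((sin x)/x − (2 + cos x)/3)/(x − sin x)², equivalently F(x) = (3·sin x − x·cos x − 2x)/(3x³ − 6x²·sin x + 3x·sin² x), is strictly increasing on the open interval (0, π/2). -/
open Real Set

lemma aux_nonneg {f f' : ℝ → ℝ} (hd : ∀ y, HasDerivAt f (f' y) y)
    (h0 : f 0 = 0) (hmono : ∀ y, 0 ≤ y → 0 ≤ f' y) {x : ℝ} (hx : 0 ≤ x) : 0 ≤ f x := by
  have hc : ContinuousOn f (Set.Ici 0) := fun y _ => (hd y).continuousAt.continuousWithinAt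
  have hm : MonotoneOn f (Set.Ici 0) := by
    apply monotoneOn_of_deriv_nonneg (convex_Ici 0) hc
    · intro y hy
      exact (hd y).differentiableAt.differentiableWithinAt
    · intro y hy
      rw [interior_Ici] at hy
      rw [(hd y).deriv]
      exact hmono y hy.le
  have h2 := hm Set.self_mem_Ici hx hx
  rwa [h0] at h2

lemma taylor_c2 (x : ℝ) (hx : 0 ≤ x) : 1 - x^2/2 ≤ cos x := by
  have h : 0 ≤ cos x - (1 - x^2/2) := by
    apply aux_nonneg (f' := fun y => -Real.sin y - (0 - (2:ℕ)*y^1/2)) ?_ (by norm_num) ?_ hx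
    · intro y
      exact (Real.hasDerivAt_cos y).sub ((hasDerivAt_const y (1:ℝ)).sub ((hasDerivAt_pow 2 y).div_const 2))
    · intro y hy
      push_cast
      nlinarith [Real.sin_le hy]
  linarith

lemma taylor_s3 (x : ℝ) (hx : 0 ≤ x) : x - x^3/6 ≤ sin x := by
  have h : 0 ≤ sin x - (x - x^3/6) := by
    apply aux_nonneg (f' := fun y => Real.cos y - (1 - (3:ℕ)*y^2/6)) ?_ (by norm_num) ?_ hx
    · intro y
      exact ((Real.hasDerivAt_sin y).sub ((hasDerivAt_id y).sub ((hasDerivAt_pow 3 y).div_const 6)))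
    · intro y hy
      have hp := taylor_c2 y hy
      push_cast
      nlinarith [hp]
  linarith

lemma taylor_c4 (x : ℝ) (hx : 0 ≤ x) : cos x ≤ 1 - x^2/2 + x^4/24 := by
  have h : 0 ≤ (1 - x^2/2 + x^4/24) - cos x := by
    apply aux_nonneg (f' := fun y => (0 - (2:ℕ)*y^1/2 + (4:ℕ)*y^3/24) - (-Real.sin y)) ?_ (by norm_num) ?_ hx
    · intro y
      exact ((((hasDerivAt_const y (1:ℝ)).sub ((hasDerivAt_pow 2 y).div_const 2)).add ((hasDerivAt_pow 4 y).div_const 24)).sub (Real.hasDerivAt_cos y))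
    · intro y hy
      have hp := taylor_s3 y hy
      push_cast
      nlinarith [hp]
  linarith

lemma taylor_s5 (x : ℝ) (hx : 0 ≤ x) : sin x ≤ x - x^3/6 + x^5/120 := by
  have h : 0 ≤ (x - x^3/6 + x^5/120) - sin x := by
    apply aux_nonneg (f' := fun y => (1 - (3:ℕ)*y^2/6 + (5:ℕ)*y^4/120) - (Real.cos y)) ?_ (by norm_num) ?_ hx
    · intro y
      exact ((((hasDerivAt_id y).sub ((hasDerivAt_pow 3 y).div_const 6)).add ((hasDerivAt_pow 5 y).div_const 120)).sub (Real.hasDerivAt_sin y))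
    · intro y hy
      have hp := taylor_c4 y hy
      push_cast
      nlinarith [hp]
  linarith

lemma taylor_c6 (x : ℝ) (hx : 0 ≤ x) : 1 - x^2/2 + x^4/24 - x^6/720 ≤ cos x := by
  have h : 0 ≤ cos x - (1 - x^2/2 + x^4/24 - x^6/720) := by
    apply aux_nonneg (f' := fun y => -Real.sin y - (0 - (2:ℕ)*y^1/2 + (4:ℕ)*y^3/24 - (6:ℕ)*y^5/720)) ?_ (by norm_num) ?_ hx
    · intro y
      exact ((Real.hasDerivAt_cos y).sub ((((hasDerivAt_const y (1:ℝ)).sub ((hasDerivAt_pow 2 y).div_const 2)).add ((hasDerivAt_pow 4 y).div_const 24)).sub ((hasDerivAt_pow 6 y).div_const 720)))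
    · intro y hy
      have hp := taylor_s5 y hy
      push_cast
      nlinarith [hp]
  linarith

lemma taylor_s7 (x : ℝ) (hx : 0 ≤ x) : x - x^3/6 + x^5/120 - x^7/5040 ≤ sin x := by
  have h : 0 ≤ sin x - (x - x^3/6 + x^5/120 - x^7/5040) := by
    apply aux_nonneg (f' := fun y => Real.cos y - (1 - (3:ℕ)*y^2/6 + (5:ℕ)*y^4/120 - (7:ℕ)*y^6/5040)) ?_ (by norm_num) ?_ hx
    · intro y
      exact ((Real.hasDerivAt_sin y).sub ((((hasDerivAt_id y).sub ((hasDerivAt_pow 3 y).div_const 6)).add ((hasDerivAt_pow 5 y).div_const 120)).sub ((hasDerivAt_pow 7 y).div_const 5040)))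
    · intro y hy
      have hp := taylor_c6 y hy
      push_cast
      nlinarith [hp]
  linarith

lemma taylor_c8 (x : ℝ) (hx : 0 ≤ x) : cos x ≤ 1 - x^2/2 + x^4/24 - x^6/720 + x^8/40320 := by
  have h : 0 ≤ (1 - x^2/2 + x^4/24 - x^6/720 + x^8/40320) - cos x := by
    apply aux_nonneg (f' := fun y => (0 - (2:ℕ)*y^1/2 + (4:ℕ)*y^3/24 - (6:ℕ)*y^5/720 + (8:ℕ)*y^7/40320) - (-Real.sin y)) ?_ (by norm_num) ?_ hx
    · intro y
      exact ((((((hasDerivAt_const y (1:ℝ)).sub ((hasDerivAt_pow 2 y).div_const 2)).add ((hasDerivAt_pow 4 y).div_const 24)).sub ((hasDerivAt_pow 6 y).div_const 720)).add ((hasDerivAt_pow 8 y).div_const 40320)).sub (Real.hasDerivAt_cos y))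
    · intro y hy
      have hp := taylor_s7 y hy
      push_cast
      nlinarith [hp]
  linarith

lemma taylor_s9 (x : ℝ) (hx : 0 ≤ x) : sin x ≤ x - x^3/6 + x^5/120 - x^7/5040 + x^9/362880 := by
  have h : 0 ≤ (x - x^3/6 + x^5/120 - x^7/5040 + x^9/362880) - sin x := by
    apply aux_nonneg (f' := fun y => (1 - (3:ℕ)*y^2/6 + (5:ℕ)*y^4/120 - (7:ℕ)*y^6/5040 + (9:ℕ)*y^8/362880) - (Real.cos y)) ?_ (by norm_num) ?_ hx
    · intro y
      exact ((((((hasDerivAt_id y).sub ((hasDerivAt_pow 3 y).div_const 6)).add ((hasDerivAt_pow 5 y).div_const 120)).sub ((hasDerivAt_pow 7 y).div_const 5040)).add ((hasDerivAt_pow 9 y).div_const 362880)).sub (Real.hasDerivAt_sin y))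
    · intro y hy
      have hp := taylor_c8 y hy
      push_cast
      nlinarith [hp]
  linarith

lemma taylor_c10 (x : ℝ) (hx : 0 ≤ x) : 1 - x^2/2 + x^4/24 - x^6/720 + x^8/40320 - x^10/3628800 ≤ cos x := by
  have h : 0 ≤ cos x - (1 - x^2/2 + x^4/24 - x^6/720 + x^8/40320 - x^10/3628800) := by
    apply aux_nonneg (f' := fun y => -Real.sin y - (0 - (2:ℕ)*y^1/2 + (4:ℕ)*y^3/24 - (6:ℕ)*y^5/720 + (8:ℕ)*y^7/40320 - (10:ℕ)*y^9/3628800)) ?_ (by norm_num) ?_ hx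
    · intro y
      exact ((Real.hasDerivAt_cos y).sub ((((((hasDerivAt_const y (1:ℝ)).sub ((hasDerivAt_pow 2 y).div_const 2)).add ((hasDerivAt_pow 4 y).div_const 24)).sub ((hasDerivAt_pow 6 y).div_const 720)).add ((hasDerivAt_pow 8 y).div_const 40320)).sub ((hasDerivAt_pow 10 y).div_const 3628800)))
    · intro y hy
      have hp := taylor_s9 y hy
      push_cast
      nlinarith [hp]
  linarith

lemma taylor_s11 (x : ℝ) (hx : 0 ≤ x) : x - x^3/6 + x^5/120 - x^7/5040 + x^9/362880 - x^11/39916800 ≤ sin x := by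
  have h : 0 ≤ sin x - (x - x^3/6 + x^5/120 - x^7/5040 + x^9/362880 - x^11/39916800) := by
    apply aux_nonneg (f' := fun y => Real.cos y - (1 - (3:ℕ)*y^2/6 + (5:ℕ)*y^4/120 - (7:ℕ)*y^6/5040 + (9:ℕ)*y^8/362880 - (11:ℕ)*y^10/39916800)) ?_ (by norm_num) ?_ hx
    · intro y
      exact ((Real.hasDerivAt_sin y).sub ((((((hasDerivAt_id y).sub ((hasDerivAt_pow 3 y).div_const 6)).add ((hasDerivAt_pow 5 y).div_const 120)).sub ((hasDerivAt_pow 7 y).div_const 5040)).add ((hasDerivAt_pow 9 y).div_const 362880)).sub ((hasDerivAt_pow 11 y).div_const 39916800)))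
    · intro y hy
      have hp := taylor_c10 y hy
      push_cast
      nlinarith [hp]
  linarith

lemma taylor_c12 (x : ℝ) (hx : 0 ≤ x) : cos x ≤ 1 - x^2/2 + x^4/24 - x^6/720 + x^8/40320 - x^10/3628800 + x^12/479001600 := by
  have h : 0 ≤ (1 - x^2/2 + x^4/24 - x^6/720 + x^8/40320 - x^10/3628800 + x^12/479001600) - cos x := by
    apply aux_nonneg (f' := fun y => (0 - (2:ℕ)*y^1/2 + (4:ℕ)*y^3/24 - (6:ℕ)*y^5/720 + (8:ℕ)*y^7/40320 - (10:ℕ)*y^9/3628800 + (12:ℕ)*y^11/479001600) - (-Real.sin y)) ?_ (by norm_num) ?_ hx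
    · intro y
      exact ((((((((hasDerivAt_const y (1:ℝ)).sub ((hasDerivAt_pow 2 y).div_const 2)).add ((hasDerivAt_pow 4 y).div_const 24)).sub ((hasDerivAt_pow 6 y).div_const 720)).add ((hasDerivAt_pow 8 y).div_const 40320)).sub ((hasDerivAt_pow 10 y).div_const 3628800)).add ((hasDerivAt_pow 12 y).div_const 479001600)).sub (Real.hasDerivAt_cos y))
    · intro y hy
      have hp := taylor_s11 y hy
      push_cast
      nlinarith [hp]
  linarith

lemma hasDerivF {x : ℝ} (hx0 : 0 < x) (hxs : sin x < x) :
    HasDerivAt (fun t : ℝ => (sin t / t - (2 + cos t) / 3) / (t - sin t) ^ 2)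
      ((((cos x * x - sin x) / x ^ 2 + sin x / 3) * (x - sin x) ^ 2 -
        (sin x / x - (2 + cos x) / 3) * (2 * (x - sin x) * (1 - cos x))) /
        ((x - sin x) ^ 2) ^ 2) x := by
  have h0 : x - sin x ≠ 0 := by linarith
  have hg : HasDerivAt (fun t : ℝ => sin t / t - (2 + cos t) / 3)
      ((cos x * x - sin x) / x ^ 2 + sin x / 3) x := by
    have h1 : HasDerivAt (fun t : ℝ => sin t / t) ((cos x * x - sin x * 1) / x ^ 2) x :=
      (Real.hasDerivAt_sin x).div (hasDerivAt_id x) hx0.ne'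
    have h2 : HasDerivAt (fun t : ℝ => (2 + cos t) / 3) ((0 + -sin x) / 3) x :=
      ((hasDerivAt_const x (2:ℝ)).add (Real.hasDerivAt_cos x)).div_const 3
    have h3 := h1.sub h2
    refine h3.congr_deriv ?_
    ring
  have hh : HasDerivAt (fun t : ℝ => (t - sin t) ^ 2) (2 * (x - sin x) * (1 - cos x)) x := by
    have h3 : HasDerivAt (fun t : ℝ => t - sin t) (1 - cos x) x :=
      (hasDerivAt_id x).sub (Real.hasDerivAt_sin x)
    have h4 := h3.pow 2
    refine h4.congr_deriv ?_
    push_cast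
    ring
  exact hg.div hh (pow_ne_zero 2 h0)

theorem F_strictMonoOn :
    StrictMonoOn (fun x : ℝ => (sin x / x - (2 + cos x) / 3) / (x - sin x) ^ 2) (Ioo 0 (π / 2)) := by
  have hpi : π < 3.15 := by linarith [Real.pi_lt_d2]
  apply strictMonoOn_of_deriv_pos (convex_Ioo 0 (π/2))
  · intro x hx
    obtain ⟨hx0, hx2⟩ := hx
    exact (hasDerivF hx0 (Real.sin_lt hx0)).continuousAt.continuousWithinAt
  · rw [interior_Ioo]
    intro x hx
    obtain ⟨hx0, hx2⟩ := hx
    have hs := Real.sin_lt hx0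
    have hxs : 0 < x - sin x := by linarith
    rw [(hasDerivF hx0 hs).deriv]
    apply div_pos _ (pow_pos (pow_pos hxs 2) 2)
    -- numerator positivity
    have hx15 : x < 1.575 := by linarith
    have hu : x^2 ≤ 2.5 := by nlinarith
    have h6 : x^6 ≤ 15.625 := by
      calc x^6 = (x^2)^3 := by ring
        _ ≤ 2.5^3 := pow_le_pow_left₀ (sq_nonneg x) hu 3
        _ = 15.625 := by norm_num
    have hQ : (0:ℝ) < x^8/180 - x^10/1200 + 2147*x^12/39916800 - 103*x^14/23950080 := by
      have hR : (0:ℝ) < 1/180 - x^2/1200 + 2147*x^4/39916800 - 103*x^6/23950080 := by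
        nlinarith [sq_nonneg (x^2), hu, h6]
      calc (0:ℝ) < x^8 * (1/180 - x^2/1200 + 2147*x^4/39916800 - 103*x^6/23950080) :=
            mul_pos (pow_pos hx0 8) hR
        _ = x^8/180 - x^10/1200 + 2147*x^12/39916800 - 103*x^14/23950080 := by ring
    have i1 := taylor_s11 x hx0.le
    have i2 := taylor_s9 x hx0.le
    have i3 := taylor_c10 x hx0.le
    have i4 := taylor_c12 (2*x) (by linarith)
    have i5 := taylor_s11 (2*x) (by linarith)
    have a1 : x^3 * (x - x^3/6 + x^5/120 - x^7/5040 + x^9/362880 - x^11/39916800) ≤ x^3 * sin x :=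
      mul_le_mul_of_nonneg_left i1 (by positivity)
    have a2 : x^2 * (1 - x^2/2 + x^4/24 - x^6/720 + x^8/40320 - x^10/3628800) ≤ x^2 * cos x :=
      mul_le_mul_of_nonneg_left i3 (by positivity)
    have a3 : 9*x * sin x ≤ 9*x * (x - x^3/6 + x^5/120 - x^7/5040 + x^9/362880) :=
      mul_le_mul_of_nonneg_left i2 (by positivity)
    have a4 : (x^2+3)/2 * cos (2*x) ≤ (x^2+3)/2 *
        (1 - (2*x)^2/2 + (2*x)^4/24 - (2*x)^6/720 + (2*x)^8/40320 - (2*x)^10/3628800 + (2*x)^12/479001600) :=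
      mul_le_mul_of_nonneg_left i4 (by positivity)
    have a5 : 3*x/2 * (2*x - (2*x)^3/6 + (2*x)^5/120 - (2*x)^7/5040 + (2*x)^9/362880 - (2*x)^11/39916800)
        ≤ 3*x/2 * sin (2*x) :=
      mul_le_mul_of_nonneg_left i5 (by positivity)
    have e1 : cos x ^ 2 = 1 - sin x ^ 2 := by
      have := sin_sq_add_cos_sq x; linarith
    have e2 : sin x ^ 2 = (1 - cos (2*x))/2 := by
      rw [Real.cos_two_mul]
      have := sin_sq_add_cos_sq x; linarith
    have e3 : sin x * cos x = sin (2*x)/2 := by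
      rw [Real.sin_two_mul]; ring
    have hP : 0 < x^3*sin x + x^2*cos x + 4*x^2 - x^2*(sin x)^2 - 2*x^2*(cos x)^2 - 9*x*sin x
        + 3*x*(sin x*cos x) + 3*(sin x)^2 := by
      have hT : x^3*sin x + x^2*cos x + 4*x^2 - x^2*(sin x)^2 - 2*x^2*(cos x)^2 - 9*x*sin x
          + 3*x*(sin x*cos x) + 3*(sin x)^2
          = x^3*sin x + x^2*cos x + 2*x^2 + (x^2+3)/2*(1 - cos (2*x))
            - 9*x*sin x + 3*x/2*sin (2*x) := by
        linear_combination (-(2*x^2))*e1 + (x^2+3)*e2 + 3*x*e3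
      rw [hT]
      linarith [a1, a2, a3, a4, a5, hQ]
    have hEq : (((cos x * x - sin x) / x ^ 2 + sin x / 3) * (x - sin x) ^ 2 -
        (sin x / x - (2 + cos x) / 3) * (2 * (x - sin x) * (1 - cos x)))
        = (x - sin x) * (x^3*sin x + x^2*cos x + 4*x^2 - x^2*(sin x)^2 - 2*x^2*(cos x)^2 - 9*x*sin x
          + 3*x*(sin x*cos x) + 3*(sin x)^2) / (3*x^2) := by
      field_simp
      ring
    rw [hEq]
    exact div_pos (mul_pos hxs hP) (by positivity)
end

section
/- The function G(x) := ((sin x)/x − (2 + cos x)/3)/(sin x − x·cos x)² is strictly increasing on the open interval (0, π/2). -/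
open Real Set

/-- Generic helper: if `f 0 = 0` and `f' ≥ 0` on `[0, ∞)`, then `f ≥ 0` on `[0, ∞)`. -/
lemma aux_nonneg_s10 (f f' : ℝ → ℝ) (hf : ∀ t, HasDerivAt f (f' t) t)
    (h0 : f 0 = 0) (hd : ∀ t, 0 ≤ t → 0 ≤ f' t) {t : ℝ} (ht : 0 ≤ t) : 0 ≤ f t := by
  have hm : MonotoneOn f (Ici (0 : ℝ)) := by
    apply monotoneOn_of_deriv_nonneg (convex_Ici 0)
    · exact fun x _ => (hf x).continuousAt.continuousWithinAt
    · exact fun x _ => (hf x).differentiableAt.differentiableWithinAt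
    · intro x hx
      rw [interior_Ici] at hx
      rw [(hf x).deriv]
      exact hd x (le_of_lt hx)
  have := hm (self_mem_Ici) (mem_Ici.2 ht) ht
  linarith [h0 ▸ this]

lemma cos_ge2 {t : ℝ} (ht : 0 ≤ t) : 1 - t ^ 2 / 2 ≤ Real.cos t := by
  have h := aux_nonneg_s10 (fun t => Real.cos t - 1 + t ^ 2 / 2) (fun t => t - Real.sin t)
    (fun t => by
      have h1 := ((Real.hasDerivAt_cos t).sub_const 1).add ((hasDerivAt_pow 2 t).div_const 2)
      refine h1.congr_deriv ?_; push_cast; ring)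
    (by norm_num) (fun t ht => by linarith [Real.sin_le ht]) ht
  linarith

lemma sin_ge3 {t : ℝ} (ht : 0 ≤ t) : t - t ^ 3 / 6 ≤ Real.sin t := by
  have h := aux_nonneg_s10 (fun t => Real.sin t - t + t ^ 3 / 6)
    (fun t => Real.cos t - 1 + t ^ 2 / 2)
    (fun t => by
      have h1 := ((Real.hasDerivAt_sin t).sub (hasDerivAt_id t)).add
        ((hasDerivAt_pow 3 t).div_const 6)
      refine h1.congr_deriv ?_; push_cast; ring)
    (by norm_num) (fun t ht => by linarith [cos_ge2 ht]) ht
  linarith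

lemma cos_le4 {t : ℝ} (ht : 0 ≤ t) : Real.cos t ≤ 1 - t ^ 2 / 2 + t ^ 4 / 24 := by
  have h := aux_nonneg_s10 (fun t => 1 - t ^ 2 / 2 + t ^ 4 / 24 - Real.cos t)
    (fun t => Real.sin t - t + t ^ 3 / 6)
    (fun t => by
      have h1 := (((hasDerivAt_pow 2 t).div_const 2).const_sub 1).add
        ((hasDerivAt_pow 4 t).div_const 24) |>.sub (Real.hasDerivAt_cos t)
      refine h1.congr_deriv ?_; push_cast; ring)
    (by norm_num) (fun t ht => by linarith [sin_ge3 ht]) ht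
  linarith

lemma sin_le5 {t : ℝ} (ht : 0 ≤ t) : Real.sin t ≤ t - t ^ 3 / 6 + t ^ 5 / 120 := by
  have h := aux_nonneg_s10 (fun t => t - t ^ 3 / 6 + t ^ 5 / 120 - Real.sin t)
    (fun t => 1 - t ^ 2 / 2 + t ^ 4 / 24 - Real.cos t)
    (fun t => by
      have h1 := ((hasDerivAt_id t).sub ((hasDerivAt_pow 3 t).div_const 6)).add
        ((hasDerivAt_pow 5 t).div_const 120) |>.sub (Real.hasDerivAt_sin t)
      refine h1.congr_deriv ?_; push_cast; ring)
    (by norm_num) (fun t ht => by linarith [cos_le4 ht]) ht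
  linarith

lemma cos_ge6 {t : ℝ} (ht : 0 ≤ t) :
    1 - t ^ 2 / 2 + t ^ 4 / 24 - t ^ 6 / 720 ≤ Real.cos t := by
  have h := aux_nonneg_s10 (fun t => Real.cos t - (1 - t ^ 2 / 2 + t ^ 4 / 24 - t ^ 6 / 720))
    (fun t => (t - t ^ 3 / 6 + t ^ 5 / 120) - Real.sin t)
    (fun t => by
      have h1 := (Real.hasDerivAt_cos t).sub
        ((((hasDerivAt_pow 2 t).div_const 2).const_sub 1).add
          ((hasDerivAt_pow 4 t).div_const 24) |>.sub ((hasDerivAt_pow 6 t).div_const 720))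
      refine h1.congr_deriv ?_; push_cast; ring)
    (by norm_num) (fun t ht => by linarith [sin_le5 ht]) ht
  linarith

lemma sin_ge7 {t : ℝ} (ht : 0 ≤ t) :
    t - t ^ 3 / 6 + t ^ 5 / 120 - t ^ 7 / 5040 ≤ Real.sin t := by
  have h := aux_nonneg_s10
    (fun t => Real.sin t - (t - t ^ 3 / 6 + t ^ 5 / 120 - t ^ 7 / 5040))
    (fun t => Real.cos t - (1 - t ^ 2 / 2 + t ^ 4 / 24 - t ^ 6 / 720))
    (fun t => by
      have h1 := (Real.hasDerivAt_sin t).sub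
        (((hasDerivAt_id t).sub ((hasDerivAt_pow 3 t).div_const 6)).add
          ((hasDerivAt_pow 5 t).div_const 120) |>.sub ((hasDerivAt_pow 7 t).div_const 5040))
      refine h1.congr_deriv ?_; push_cast; ring)
    (by norm_num) (fun t ht => by linarith [cos_ge6 ht]) ht
  linarith

lemma cos_le8 {t : ℝ} (ht : 0 ≤ t) :
    Real.cos t ≤ 1 - t ^ 2 / 2 + t ^ 4 / 24 - t ^ 6 / 720 + t ^ 8 / 40320 := by
  have h := aux_nonneg_s10
    (fun t => (1 - t ^ 2 / 2 + t ^ 4 / 24 - t ^ 6 / 720 + t ^ 8 / 40320) - Real.cos t)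
    (fun t => Real.sin t - (t - t ^ 3 / 6 + t ^ 5 / 120 - t ^ 7 / 5040))
    (fun t => by
      have h1 := ((((hasDerivAt_pow 2 t).div_const 2).const_sub 1).add
        ((hasDerivAt_pow 4 t).div_const 24) |>.sub ((hasDerivAt_pow 6 t).div_const 720)
        |>.add ((hasDerivAt_pow 8 t).div_const 40320)).sub (Real.hasDerivAt_cos t)
      refine h1.congr_deriv ?_; push_cast; ring)
    (by norm_num) (fun t ht => by linarith [sin_ge7 ht]) ht
  linarith

lemma sin_le9 {t : ℝ} (ht : 0 ≤ t) :
    Real.sin t ≤ t - t ^ 3 / 6 + t ^ 5 / 120 - t ^ 7 / 5040 + t ^ 9 / 362880 := by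
  have h := aux_nonneg_s10
    (fun t => (t - t ^ 3 / 6 + t ^ 5 / 120 - t ^ 7 / 5040 + t ^ 9 / 362880) - Real.sin t)
    (fun t => (1 - t ^ 2 / 2 + t ^ 4 / 24 - t ^ 6 / 720 + t ^ 8 / 40320) - Real.cos t)
    (fun t => by
      have h1 := (((hasDerivAt_id t).sub ((hasDerivAt_pow 3 t).div_const 6)).add
        ((hasDerivAt_pow 5 t).div_const 120) |>.sub ((hasDerivAt_pow 7 t).div_const 5040)
        |>.add ((hasDerivAt_pow 9 t).div_const 362880)).sub (Real.hasDerivAt_sin t)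
      refine h1.congr_deriv ?_; push_cast; ring)
    (by norm_num) (fun t ht => by linarith [cos_le8 ht]) ht
  linarith

lemma cos_ge10 {t : ℝ} (ht : 0 ≤ t) :
    1 - t ^ 2 / 2 + t ^ 4 / 24 - t ^ 6 / 720 + t ^ 8 / 40320 - t ^ 10 / 3628800
      ≤ Real.cos t := by
  have h := aux_nonneg_s10
    (fun t => Real.cos t -
      (1 - t ^ 2 / 2 + t ^ 4 / 24 - t ^ 6 / 720 + t ^ 8 / 40320 - t ^ 10 / 3628800))
    (fun t => (t - t ^ 3 / 6 + t ^ 5 / 120 - t ^ 7 / 5040 + t ^ 9 / 362880) - Real.sin t)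
    (fun t => by
      have h1 := (Real.hasDerivAt_cos t).sub
        ((((hasDerivAt_pow 2 t).div_const 2).const_sub 1).add
          ((hasDerivAt_pow 4 t).div_const 24) |>.sub ((hasDerivAt_pow 6 t).div_const 720)
          |>.add ((hasDerivAt_pow 8 t).div_const 40320)
          |>.sub ((hasDerivAt_pow 10 t).div_const 3628800))
      refine h1.congr_deriv ?_; push_cast; ring)
    (by norm_num) (fun t ht => by linarith [sin_le9 ht]) ht
  linarith

lemma sin_ge11 {t : ℝ} (ht : 0 ≤ t) :
    t - t ^ 3 / 6 + t ^ 5 / 120 - t ^ 7 / 5040 + t ^ 9 / 362880 - t ^ 11 / 39916800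
      ≤ Real.sin t := by
  have h := aux_nonneg_s10
    (fun t => Real.sin t -
      (t - t ^ 3 / 6 + t ^ 5 / 120 - t ^ 7 / 5040 + t ^ 9 / 362880 - t ^ 11 / 39916800))
    (fun t => Real.cos t -
      (1 - t ^ 2 / 2 + t ^ 4 / 24 - t ^ 6 / 720 + t ^ 8 / 40320 - t ^ 10 / 3628800))
    (fun t => by
      have h1 := (Real.hasDerivAt_sin t).sub
        (((hasDerivAt_id t).sub ((hasDerivAt_pow 3 t).div_const 6)).add
          ((hasDerivAt_pow 5 t).div_const 120) |>.sub ((hasDerivAt_pow 7 t).div_const 5040)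
          |>.add ((hasDerivAt_pow 9 t).div_const 362880)
          |>.sub ((hasDerivAt_pow 11 t).div_const 39916800))
      refine h1.congr_deriv ?_; push_cast; ring)
    (by norm_num) (fun t ht => by linarith [cos_ge10 ht]) ht
  linarith

/-- Positivity of the denominator `sin x - x cos x` on `(0, 1.6)`. -/
lemma d_pos {x : ℝ} (hx : 0 < x) (hx' : x < 1.6) : 0 < Real.sin x - x * Real.cos x := by
  have h1 := sin_ge3 hx.le
  have h2 := cos_le4 hx.le
  have h3 : x * Real.cos x ≤ x * (1 - x ^ 2 / 2 + x ^ 4 / 24) :=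
    mul_le_mul_of_nonneg_left h2 hx.le
  have t1 : 0 < x ^ 3 * (8 - x ^ 2) := mul_pos (pow_pos hx 3) (by nlinarith)
  nlinarith [h1, h3, t1]

/-- Key inequality: the (rescaled) numerator of `G'` is positive. -/
lemma P_pos {x : ℝ} (hx : 0 < x) (hx' : x < 1.6) :
    0 < 6 * x * (Real.sin x * Real.cos x) - 3 * Real.sin x ^ 2 - 3 * x ^ 2
      - 2 * x ^ 2 * Real.sin x ^ 2 + x ^ 3 * (Real.sin x * Real.cos x)
      + 4 * x ^ 3 * Real.sin x := by
  have h2x : (0 : ℝ) ≤ 2 * x := by linarith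
  have hs2 := sin_ge11 h2x
  have hc2 := cos_ge10 h2x
  have hs1 := sin_ge11 hx.le
  -- double-angle rewrites
  have hsc : Real.sin x * Real.cos x = Real.sin (2 * x) / 2 := by
    rw [Real.sin_two_mul]; ring
  have hsq : Real.sin x ^ 2 = (1 - Real.cos (2 * x)) / 2 := by
    have h := Real.cos_two_mul x
    have h2 := Real.sin_sq_add_cos_sq x
    nlinarith [h, h2]
  rw [hsc, hsq]
  set S : ℝ := Real.sin (2 * x) with hS
  set C : ℝ := Real.cos (2 * x) with hC
  set s : ℝ := Real.sin x with hs
  -- the polynomial lower bound Q(x)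
  have hQ : 0 < x ^ 8 / 90 - x ^ 10 / 300 + 1399 / 4989600 * x ^ 12
      - 257 / 9979200 * x ^ 14 := by
    have hu : x ^ 2 < 2.56 := by nlinarith
    have t1 : 0 ≤ (2.56 - x ^ 2) * (x ^ 2) ^ 2 := mul_nonneg (by linarith) (sq_nonneg _)
    have hR : 0 < 1 / 90 - x ^ 2 / 300 + 1399 / 4989600 * (x ^ 2) ^ 2
        - 257 / 9979200 * (x ^ 2) ^ 3 := by
      nlinarith [t1, sq_nonneg (x ^ 2), sq_nonneg x]
    have h8 : (0 : ℝ) < x ^ 8 := pow_pos hx 8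
    have iden8 : x ^ 8 / 90 - x ^ 10 / 300 + 1399 / 4989600 * x ^ 12
        - 257 / 9979200 * x ^ 14 = x ^ 8 * (1 / 90 - x ^ 2 / 300
        + 1399 / 4989600 * (x ^ 2) ^ 2 - 257 / 9979200 * (x ^ 2) ^ 3) := by ring
    rw [iden8]
    exact mul_pos h8 hR
  -- remainder terms are nonnegative
  have e1 : 0 ≤ (3 * x + x ^ 3 / 2) *
      (S - ((2*x) - (2*x) ^ 3 / 6 + (2*x) ^ 5 / 120 - (2*x) ^ 7 / 5040
        + (2*x) ^ 9 / 362880 - (2*x) ^ 11 / 39916800)) := by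
    apply mul_nonneg (by positivity)
    linarith [hs2]
  have e2 : 0 ≤ (3 / 2 + x ^ 2) *
      (C - (1 - (2*x) ^ 2 / 2 + (2*x) ^ 4 / 24 - (2*x) ^ 6 / 720 + (2*x) ^ 8 / 40320
        - (2*x) ^ 10 / 3628800)) := by
    apply mul_nonneg (by positivity)
    linarith [hc2]
  have e3 : 0 ≤ (4 * x ^ 3) *
      (s - (x - x ^ 3 / 6 + x ^ 5 / 120 - x ^ 7 / 5040 + x ^ 9 / 362880
        - x ^ 11 / 39916800)) := by
    apply mul_nonneg (by positivity)
    linarith [hs1]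
  have iden : 6 * x * (S / 2) - 3 * ((1 - C) / 2) - 3 * x ^ 2
      - 2 * x ^ 2 * ((1 - C) / 2) + x ^ 3 * (S / 2) + 4 * x ^ 3 * s
      = (x ^ 8 / 90 - x ^ 10 / 300 + 1399 / 4989600 * x ^ 12 - 257 / 9979200 * x ^ 14)
        + (3 * x + x ^ 3 / 2) *
          (S - ((2*x) - (2*x) ^ 3 / 6 + (2*x) ^ 5 / 120 - (2*x) ^ 7 / 5040
            + (2*x) ^ 9 / 362880 - (2*x) ^ 11 / 39916800))
        + (3 / 2 + x ^ 2) *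
          (C - (1 - (2*x) ^ 2 / 2 + (2*x) ^ 4 / 24 - (2*x) ^ 6 / 720 + (2*x) ^ 8 / 40320
            - (2*x) ^ 10 / 3628800))
        + (4 * x ^ 3) *
          (s - (x - x ^ 3 / 6 + x ^ 5 / 120 - x ^ 7 / 5040 + x ^ 9 / 362880
            - x ^ 11 / 39916800)) := by
    ring
  linarith [e1, e2, e3, hQ, iden]

theorem G_strictMonoOn :
    StrictMonoOn (fun x : ℝ => (sin x / x - (2 + cos x) / 3) / (sin x - x * cos x) ^ 2) (Ioo 0 (π / 2)) := by
  have hpi : π < 3.15 := by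
    have := Real.pi_lt_d2
    linarith
  have hlt : ∀ x ∈ Ioo 0 (π / 2), x < 1.6 := by
    intro x hx
    have := hx.2
    norm_num at this ⊢
    linarith
  apply strictMonoOn_of_deriv_pos (convex_Ioo 0 (π / 2))
  · -- continuity
    apply ContinuousOn.div
    · exact (Real.continuous_sin.continuousOn.div continuous_id.continuousOn
        (fun x hx => ne_of_gt hx.1)).sub
        ((continuous_const.add Real.continuous_cos).div_const 3).continuousOn
    · exact ((Real.continuous_sin.sub (continuous_id.mul Real.continuous_cos)).pow 2).continuousOn
    · intro x hx
      exact pow_ne_zero 2 (ne_of_gt (d_pos hx.1 (hlt x hx)))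
  · rw [interior_Ioo]
    intro x hx
    have hx0 : 0 < x := hx.1
    have hx16 : x < 1.6 := hlt x hx
    have hxne : x ≠ 0 := ne_of_gt hx0
    have hdpos : 0 < Real.sin x - x * Real.cos x := d_pos hx0 hx16
    have hdne : Real.sin x - x * Real.cos x ≠ 0 := ne_of_gt hdpos
    -- derivatives
    have h1 : HasDerivAt (fun y : ℝ => Real.sin y / y)
        ((Real.cos x * x - Real.sin x * 1) / x ^ 2) x :=
      (Real.hasDerivAt_sin x).div (hasDerivAt_id x) hxne
    have h2 : HasDerivAt (fun y : ℝ => (2 + Real.cos y) / 3) (-Real.sin x / 3) x := by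
      have := ((hasDerivAt_const x (2:ℝ)).add (Real.hasDerivAt_cos x)).div_const 3
      refine this.congr_deriv ?_
      ring
    have hnum := h1.sub h2
    have hd : HasDerivAt (fun y : ℝ => Real.sin y - y * Real.cos y) (x * Real.sin x) x := by
      have := (Real.hasDerivAt_sin x).sub ((hasDerivAt_id x).mul (Real.hasDerivAt_cos x))
      refine this.congr_deriv ?_
      simp only [id_eq]
      ring
    have hden : HasDerivAt (fun y : ℝ => (Real.sin y - y * Real.cos y) ^ 2)
        (2 * (Real.sin x - x * Real.cos x) * (x * Real.sin x)) x := by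
      have := hd.pow 2
      refine this.congr_deriv ?_
      push_cast
      ring
    have hG : HasDerivAt (fun y : ℝ => (Real.sin y / y - (2 + Real.cos y) / 3) /
        (Real.sin y - y * Real.cos y) ^ 2)
        ((((Real.cos x * x - Real.sin x * 1) / x ^ 2 - -Real.sin x / 3) *
            (Real.sin x - x * Real.cos x) ^ 2 -
          (Real.sin x / x - (2 + Real.cos x) / 3) *
            (2 * (Real.sin x - x * Real.cos x) * (x * Real.sin x))) /
          ((Real.sin x - x * Real.cos x) ^ 2) ^ 2) x :=
      hnum.div hden (pow_ne_zero 2 hdne)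
    rw [hG.deriv]
    apply div_pos
    · -- numerator positive
      have hP := P_pos hx0 hx16
      have key : 3 * x ^ 2 *
          (((Real.cos x * x - Real.sin x * 1) / x ^ 2 - -Real.sin x / 3) *
              (Real.sin x - x * Real.cos x) ^ 2 -
            (Real.sin x / x - (2 + Real.cos x) / 3) *
              (2 * (Real.sin x - x * Real.cos x) * (x * Real.sin x))) =
          (Real.sin x - x * Real.cos x) *
            (6 * x * (Real.sin x * Real.cos x) - 3 * Real.sin x ^ 2 - 3 * x ^ 2
              - 2 * x ^ 2 * Real.sin x ^ 2 + x ^ 3 * (Real.sin x * Real.cos x)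
              + 4 * x ^ 3 * Real.sin x) := by
        have hpy := Real.sin_sq_add_cos_sq x
        field_simp
        linear_combination (-3 * x ^ 2) * hpy
      have hpos : 0 < (Real.sin x - x * Real.cos x) *
          (6 * x * (Real.sin x * Real.cos x) - 3 * Real.sin x ^ 2 - 3 * x ^ 2
            - 2 * x ^ 2 * Real.sin x ^ 2 + x ^ 3 * (Real.sin x * Real.cos x)
            + 4 * x ^ 3 * Real.sin x) := mul_pos hdpos hP
      nlinarith [key, hpos, sq_nonneg x]
    · positivity
end
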